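/- Let H be a real inner product space. The map g : H → H defined by g(ξ) = (1 + ‖ξ‖²)^{−1}·ξ is Lipschitz continuous with Lipschitz constant 1, i.e. ‖g(ξ) − g(η)‖ ≤ ‖ξ − η‖ for all ξ, η ∈ H. -/

import Mathlib

theorem stmt_15 (H : Type*) [NormedAddCommGroup H] [InnerProductSpace ℝ H]
    (g : H → H) (hg : ∀ ξ : H, g ξ = (1 + ‖ξ‖ ^ 2)⁻¹ • ξ) :
    ∀ ξ η : H, ‖g ξ - g η‖ ≤ ‖ξ - η‖ := by
  intro ξ η
  have ha : (0:ℝ) < 1 + ‖ξ‖ ^ 2 := by positivity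
  have hb : (0:ℝ) < 1 + ‖η‖ ^ 2 := by positivity
  have hCS : |inner ℝ ξ η| ≤ ‖ξ‖ * ‖η‖ := abs_real_inner_le_norm ξ η
  have key : ‖g ξ - g η‖ ^ 2 ≤ ‖ξ - η‖ ^ 2 := by
    rw [hg, hg, norm_sub_sq_real, norm_sub_sq_real, norm_smul, norm_smul,
      real_inner_smul_left, real_inner_smul_right]
    have habs : ‖(1 + ‖ξ‖ ^ 2)⁻¹‖ = (1 + ‖ξ‖ ^ 2)⁻¹ := by
      rw [Real.norm_eq_abs, abs_of_pos (by positivity)]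
    have hbabs : ‖(1 + ‖η‖ ^ 2)⁻¹‖ = (1 + ‖η‖ ^ 2)⁻¹ := by
      rw [Real.norm_eq_abs, abs_of_pos (by positivity)]
    rw [habs, hbabs]
    set s := ‖ξ‖ with hs
    set t := ‖η‖ with ht
    set p := (inner ℝ ξ η : ℝ) with hp
    have h1 : p ≤ s * t := le_trans (le_abs_self p) hCS
    have h2 : -(s * t) ≤ p := neg_le_of_abs_le hCS
    have hs0 : 0 ≤ s := norm_nonneg _
    have ht0 : 0 ≤ t := norm_nonneg _
    have expand : ((1 + s ^ 2)⁻¹ * s) ^ 2 - 2 * ((1 + s ^ 2)⁻¹ * ((1 + t ^ 2)⁻¹ * p))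
          + ((1 + t ^ 2)⁻¹ * t) ^ 2
          = (s ^ 2 * (1 + t ^ 2) ^ 2 - 2 * p * (1 + s ^ 2) * (1 + t ^ 2)
            + t ^ 2 * (1 + s ^ 2) ^ 2) / ((1 + s ^ 2) ^ 2 * (1 + t ^ 2) ^ 2) := by
      field_simp
    rw [expand, div_le_iff₀ (by positivity)]
    have h3 : 0 ≤ s * t - p := by linarith
    have hQ : 0 ≤ (s - t) ^ 2 * (2*t^2 + t^4 + 2*s*t + 2*s^2 + 3*s^2*t^2
        + 2*s^2*t^4 + s^4 + 2*s^4*t^2 + s^4*t^4) :=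
      mul_nonneg (sq_nonneg _) (by positivity)
    have hprod : 0 ≤ (s * t - p) * ((1 + s^2) * (1 + t^2)
        * ((1 + s^2) * (1 + t^2) - 1)) :=
      mul_nonneg h3 (by nlinarith [sq_nonneg s, sq_nonneg t, mul_nonneg hs0 ht0, sq_nonneg (s*t)])
    nlinarith [hQ, hprod]
  have h1 : 0 ≤ ‖g ξ - g η‖ := norm_nonneg _
  have h2 : 0 ≤ ‖ξ - η‖ := norm_nonneg _
  nlinarith [key, h1, h2]
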